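/- Let n ≥ 1, let P be an n×n orthogonal projection, and let B_1, …, B_K be n×n complex matrices with B_i P = P B_i = P for all i and 1 − ‖B_i − P‖ ≥ x_i^l · f^{l−1} for some reals x_i ∈ [0,1], a real f ∈ (0,1], and an integer l ≥ 1. Let N, t ≥ 1 be integers, d ≥ 2 an integer, ε ∈ (0,1], and x ∈ (0,1] with (1/K)·∑_{i=1}^{K} x_i ≥ x. If K ≥ x^{−l}·f^{−(l−1)}·(2·N·t·log d − log ε), then ‖B_K ⋯ B_2 B_1 − P‖ ≤ ε·d^{−2Nt}. -/

import Mathlib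

open Matrix

/-- The operator norm of a square complex matrix (largest singular value). -/
noncomputable def opNorm {n : Type*} [Fintype n] [DecidableEq n] (A : Matrix n n ℂ) : ℝ :=
  ‖Matrix.toEuclideanCLM (𝕜 := ℂ) A‖

lemma P_mul_list_prod {m : Type*} [Fintype m] [DecidableEq m] (P : Matrix m m ℂ)
    (hP : P * P = P) :
    ∀ (L : List (Matrix m m ℂ)), (∀ M ∈ L, P * M = P) → P * L.prod = P := by
  intro L
  induction L with
  | nil => intro _; simp
  | cons a L ih =>
    intro h
    have ha : P * a = P := h a (by simp)
    have hL : P * L.prod = P := ih (fun M hM => h M (by simp [hM]))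
    calc P * (a :: L).prod = (P * a) * L.prod := by rw [List.prod_cons, mul_assoc]
    _ = P := by rw [ha, hL]

lemma list_prod_sub_P {m : Type*} [Fintype m] [DecidableEq m] (P : Matrix m m ℂ)
    (hP : P * P = P) :
    ∀ (L : List (Matrix m m ℂ)), L ≠ [] → (∀ M ∈ L, M * P = P) → (∀ M ∈ L, P * M = P) →
      L.prod - P = (L.map (· - P)).prod := by
  intro L
  induction L with
  | nil => intro h; exact absurd rfl h
  | cons a L ih =>
    intro _ h1 h2
    have ha1 : a * P = P := h1 a (by simp)
    rcases List.eq_nil_or_concat L with rfl | hne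
    · simp
    have hLne : L ≠ [] := by rcases hne with ⟨L', b, rfl⟩; simp
    have hL : L.prod - P = (L.map (· - P)).prod :=
      ih hLne (fun M hM => h1 M (by simp [hM])) (fun M hM => h2 M (by simp [hM]))
    have hPL : P * L.prod = P :=
      P_mul_list_prod P hP L (fun M hM => h2 M (by simp [hM]))
    calc (a :: L).prod - P = a * L.prod - P := by rw [List.prod_cons]
    _ = (a - P) * (L.prod - P) := by
        rw [Matrix.sub_mul, Matrix.mul_sub, Matrix.mul_sub, ha1, hPL, hP]
        abel
    _ = ((a :: L).map (· - P)).prod := by rw [hL]; simp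

set_option synthInstance.maxHeartbeats 1000000 in
/-- Theorem S2 / Theorem 2 of the main text, abstracted.
A fixed-architecture circuit built from `K` connected blocks with moment operators `B i`,
Haar projector `P`, block gaps `1 - ‖B i - P‖ ≥ x_i^l f^(l-1)`, and averaged local gap at
least `x`, forms an `ε`-approximate `t`-design once
`K ≥ x^(-l) f^(-(l-1)) (2 N t log d - log ε)`. -/
theorem fixed_architecture_design_depth
    (n K : ℕ) (hn : 1 ≤ n)
    (P : Matrix (Fin n) (Fin n) ℂ) (hP_herm : Pᴴ = P) (hP_idem : P * P = P)
    (B : Fin K → Matrix (Fin n) (Fin n) ℂ)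
    (hBP : ∀ i, B i * P = P) (hPB : ∀ i, P * B i = P)
    (l : ℕ) (hl : 1 ≤ l)
    (x : ℝ) (hx0 : 0 < x) (hx1 : x ≤ 1)
    (f : ℝ) (hf0 : 0 < f) (hf1 : f ≤ 1)
    (xi : Fin K → ℝ) (hxi0 : ∀ i, 0 ≤ xi i) (hxi1 : ∀ i, xi i ≤ 1)
    (hgap : ∀ i, 1 - opNorm (B i - P) ≥ xi i ^ l * f ^ (l - 1))
    (N t d : ℕ) (hN : 1 ≤ N) (ht : 1 ≤ t) (hd : 2 ≤ d)
    (ε : ℝ) (hε0 : 0 < ε) (hε1 : ε ≤ 1)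
    (hav : (1 / (K : ℝ)) * ∑ i, xi i ≥ x)
    (hK : (K : ℝ) ≥ x ^ (-(l : ℤ)) * f ^ (-((l : ℤ) - 1)) *
      (2 * N * t * Real.log d - Real.log ε)) :
    opNorm ((List.ofFn B).reverse.prod - P) ≤ ε * ((d : ℝ) ^ (2 * N * t))⁻¹ := by
  -- abbreviations
  set C : ℝ := 2 * N * t * Real.log d - Real.log ε with hC
  have hd1 : (1 : ℝ) < d := by exact_mod_cast Nat.lt_of_lt_of_le one_lt_two hd
  have hlogd : 0 < Real.log d := Real.log_pos hd1
  have hlogε : Real.log ε ≤ 0 := Real.log_nonpos hε0.le hε1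
  have hNt : (1 : ℝ) ≤ 2 * N * t := by
    have : (1:ℝ) ≤ N := by exact_mod_cast hN
    have ht' : (1:ℝ) ≤ t := by exact_mod_cast ht
    nlinarith
  have hC0 : 0 < C := by
    have : (1:ℝ) * Real.log d ≤ 2 * N * t * Real.log d :=
      mul_le_mul_of_nonneg_right hNt hlogd.le
    simp only [hC]; nlinarith
  have hxl : (0:ℝ) < x ^ l := pow_pos hx0 l
  have hfl : (0:ℝ) < f ^ (l - 1) := pow_pos hf0 (l - 1)
  -- K positive
  have hKpos : 0 < K := by
    rcases Nat.eq_zero_or_pos K with rfl | h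
    · exfalso
      have hpos : 0 < x ^ (-(l : ℤ)) * f ^ (-((l : ℤ) - 1)) * C := by
        have h1 : (0:ℝ) < x ^ (-(l:ℤ)) := zpow_pos hx0 _
        have h2 : (0:ℝ) < f ^ (-((l:ℤ) - 1)) := zpow_pos hf0 _
        positivity
      simp only [Nat.cast_zero] at hK
      linarith
    · exact h
  have hKR : (0:ℝ) < K := by exact_mod_cast hKpos
  -- rewrite zpow
  have hzx : x ^ (-(l : ℤ)) = (x ^ l)⁻¹ := by
    rw [_root_.zpow_neg, zpow_natCast]
  have hzf : f ^ (-((l : ℤ) - 1)) = (f ^ (l - 1))⁻¹ := by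
    have : ((l : ℤ) - 1) = ((l - 1 : ℕ) : ℤ) := by
      have := hl; omega
    rw [this, _root_.zpow_neg, zpow_natCast]
  have hKC : C ≤ (K : ℝ) * (x ^ l * f ^ (l - 1)) := by
    rw [hzx, hzf] at hK
    have h := mul_le_mul_of_nonneg_right hK (le_of_lt (mul_pos hxl hfl))
    have he : (x ^ l)⁻¹ * (f ^ (l-1))⁻¹ * C * (x ^ l * f ^ (l - 1)) = C := by
      field_simp
    linarith [h, he.ge, he.le]
  -- sum of x_i^l ≥ K x^l
  have hsum_xi : (K : ℝ) * x ≤ ∑ i, xi i := by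
    have := mul_le_mul_of_nonneg_left hav hKR.le
    calc (K : ℝ) * x ≤ (K:ℝ) * ((1 / (K : ℝ)) * ∑ i, xi i) := this
    _ = ∑ i, xi i := by field_simp
  obtain ⟨m, rfl⟩ : ∃ m, l = m + 1 := ⟨l - 1, by omega⟩
  have hjensen : ((∑ i, xi i) ^ (m + 1)) / (K : ℝ) ^ m ≤ ∑ i, xi i ^ (m + 1) := by
    have := pow_sum_div_card_le_sum_pow (s := Finset.univ) (f := xi)
      (fun i _ => hxi0 i) m
    simpa using this
  have hsum_pow : (K : ℝ) * x ^ (m + 1) ≤ ∑ i, xi i ^ (m + 1) := by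
    have h1 : ((K : ℝ) * x) ^ (m + 1) ≤ (∑ i, xi i) ^ (m + 1) := by
      apply pow_le_pow_left₀ (by positivity) hsum_xi
    have h2 : (K : ℝ) * x ^ (m + 1) = ((K : ℝ) * x) ^ (m + 1) / (K : ℝ) ^ m := by
      rw [mul_pow]; field_simp; ring
    rw [h2]
    refine le_trans (div_le_div_of_nonneg_right h1 (by positivity) |>.trans_eq rfl ) hjensen
  -- total exponent bound
  have hexp_bound : C ≤ (∑ i, xi i ^ (m + 1) * f ^ (m + 1 - 1)) := by
    have : (∑ i, xi i ^ (m + 1) * f ^ (m + 1 - 1))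
        = (∑ i, xi i ^ (m + 1)) * f ^ (m + 1 - 1) := by
      rw [Finset.sum_mul]
    rw [this]
    calc C ≤ (K : ℝ) * (x ^ (m+1) * f ^ (m + 1 - 1)) := hKC
    _ = ((K:ℝ) * x ^ (m+1)) * f ^ (m + 1 - 1) := by ring
    _ ≤ (∑ i, xi i ^ (m + 1)) * f ^ (m + 1 - 1) :=
        mul_le_mul_of_nonneg_right hsum_pow hfl.le
  -- norms
  haveI : Nonempty (Fin n) := ⟨⟨0, hn⟩⟩
  haveI : Nontrivial (EuclideanSpace ℂ (Fin n)) := by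
    unfold EuclideanSpace PiLp
    infer_instance
  set T := Matrix.toEuclideanCLM (𝕜 := ℂ) (n := Fin n)
  set L : List (Matrix (Fin n) (Fin n) ℂ) := (List.ofFn B).reverse with hLdef
  have hmemL : ∀ M ∈ L, ∃ i, B i = M := by
    intro M hM
    rw [hLdef, List.mem_reverse, List.mem_ofFn] at hM
    exact hM
  have hLne : L ≠ [] := by
    rw [hLdef]
    intro h
    have := congrArg List.length h
    simp at this
    omega
  have hfact : L.prod - P = (L.map (· - P)).prod := by
    apply list_prod_sub_P P hP_idem L hLne
    · intro M hM; obtain ⟨i, rfl⟩ := hmemL M hM; exact hBP i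
    · intro M hM; obtain ⟨i, rfl⟩ := hmemL M hM; exact hPB i
  have hnorm1 : opNorm (L.prod - P) ≤ (L.map (fun M => opNorm (M - P))).prod := by
    rw [hfact]
    unfold opNorm
    rw [map_list_prod T]
    have := List.norm_prod_le' (l := (L.map (· - P)).map T)
      (by simp [hLne])
    refine this.trans_eq ?_
    simp only [List.map_map]
    congr 1
  have hnorm2 : (L.map (fun M => opNorm (M - P))).prod
      = ∏ i, opNorm (B i - P) := by
    rw [hLdef, List.map_reverse, List.prod_reverse, List.map_ofFn, List.prod_ofFn]
    rfl
  have hprod_le : ∏ i, opNorm (B i - P) ≤ ∏ i, Real.exp (-(xi i ^ (m+1) * f ^ (m + 1 - 1))) := by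
    apply Finset.prod_le_prod
    · intro i _; exact norm_nonneg _
    · intro i _
      have h1 : opNorm (B i - P) ≤ 1 - xi i ^ (m+1) * f ^ (m + 1 - 1) := by
        have := hgap i; linarith
      refine h1.trans ?_
      have := Real.add_one_le_exp (-(xi i ^ (m+1) * f ^ (m + 1 - 1)))
      linarith
  have hexp : ∏ i, Real.exp (-(xi i ^ (m+1) * f ^ (m + 1 - 1)))
      = Real.exp (-(∑ i, xi i ^ (m+1) * f ^ (m + 1 - 1))) := by
    rw [← Real.exp_sum]
    congr 1
    rw [← Finset.sum_neg_distrib]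
  have hfinal : Real.exp (-(∑ i, xi i ^ (m+1) * f ^ (m + 1 - 1)))
      ≤ ε * ((d : ℝ) ^ (2 * N * t))⁻¹ := by
    have hdpow : (0:ℝ) < (d : ℝ) ^ (2 * N * t) := by positivity
    have hrhs : ε * ((d : ℝ) ^ (2 * N * t))⁻¹
        = Real.exp (Real.log ε - Real.log ((d : ℝ) ^ (2 * N * t))) := by
      rw [Real.exp_sub, Real.exp_log hε0, Real.exp_log hdpow]
      ring
    rw [hrhs]
    apply Real.exp_le_exp.2
    have hlogpow : Real.log ((d : ℝ) ^ (2 * N * t)) = (2 * N * t : ℕ) * Real.log d := by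
      rw [Real.log_pow]
    rw [hlogpow]
    have : (2 * N * t : ℕ) * Real.log d = 2 * (N:ℝ) * t * Real.log d := by
      push_cast; ring
    rw [this]
    linarith [hexp_bound]
  calc opNorm (L.prod - P) ≤ (L.map (fun M => opNorm (M - P))).prod := hnorm1
  _ = ∏ i, opNorm (B i - P) := hnorm2
  _ ≤ ∏ i, Real.exp (-(xi i ^ (m+1) * f ^ (m + 1 - 1))) := hprod_le
  _ = Real.exp (-(∑ i, xi i ^ (m+1) * f ^ (m + 1 - 1))) := hexp
  _ ≤ ε * ((d : ℝ) ^ (2 * N * t))⁻¹ := hfinal
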